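/- Let g be a finite-dimensional complex inner product space equipped with a complex Lie algebra structure, and let h : g → g be a ℂ-linear Lie algebra automorphism (bijective with h⁅x,y⁆ = ⁅h x, h y⁆ for all x, y) which is self-adjoint with respect to the inner product and positive definite (⟨h x, x⟩ > 0 for all x ≠ 0). Then there exists a self-adjoint ℂ-linear map H : g → g which is a derivation of the Lie algebra (H⁅x,y⁆ = ⁅H x, y⁆ + ⁅x, H y⁆ for all x, y) such that exp(H) = h. -/

import Mathlib

open scoped ComplexInnerProductSpace

lemma exp_apply_eigenvector' {g : Type*} [NormedAddCommGroup g] [NormedSpace ℂ g]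
    [CompleteSpace g] (T : g →L[ℂ] g) (c : ℂ) (v : g) (hv : T v = c • v) :
    NormedSpace.exp T v = Complex.exp c • v := by
  have hpow : ∀ n : ℕ, (T ^ n) v = c ^ n • v := by
    intro n
    induction n with
    | zero => simp
    | succ n ih =>
      rw [pow_succ, pow_succ, ContinuousLinearMap.mul_apply, hv, map_smul, ih, smul_smul,
        mul_comm]
  have hs : Summable fun n : ℕ => ((n.factorial : ℂ))⁻¹ • T ^ n := NormedSpace.expSeries_summable' T
  have h1 : NormedSpace.exp T v = ∑' n : ℕ, (((n.factorial : ℂ))⁻¹ • T ^ n) v := by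
    rw [NormedSpace.exp_eq_tsum (𝕂 := ℂ)]
    exact ((hs.hasSum.mapL (ContinuousLinearMap.apply ℂ g v)).tsum_eq).symm ▸ rfl
  rw [h1]
  have h2 : ∀ n : ℕ, (((n.factorial : ℂ))⁻¹ • T ^ n) v = (((n.factorial : ℂ))⁻¹ * c ^ n) • v := by
    intro n
    rw [ContinuousLinearMap.smul_apply, hpow, smul_smul]
  simp_rw [h2]
  have hsc : Summable fun n : ℕ => ((n.factorial : ℂ))⁻¹ * c ^ n := by
    simpa [smul_eq_mul] using NormedSpace.expSeries_summable' (𝕂 := ℂ) c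
  rw [hsc.tsum_smul_const]  -- guess name
  congr 1
  rw [Complex.exp_eq_exp_ℂ, NormedSpace.exp_eq_tsum (𝕂 := ℂ)]
  simp [smul_eq_mul]


/-- A positive self-adjoint automorphism `h` of a finite-dimensional complex Lie algebra
(with an inner product) is the exponential of a self-adjoint derivation `H`. -/
theorem exists_selfAdjoint_derivation_exp_eq_of_pos_selfAdjoint_aut
    {g : Type*} [NormedAddCommGroup g] [InnerProductSpace ℂ g] [FiniteDimensional ℂ g]
    (br : g →ₗ[ℂ] g →ₗ[ℂ] g)
    (hskew : ∀ x y : g, br x y = - br y x)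
    (hjacobi : ∀ x y z : g, br x (br y z) = br (br x y) z + br y (br x z))
    (h : g →L[ℂ] g)
    (hbij : Function.Bijective h)
    (haut : ∀ x y : g, h (br x y) = br (h x) (h y))
    (hsa : ∀ x y : g, ⟪h x, y⟫ = ⟪x, h y⟫)
    (hpos : ∀ x : g, x ≠ 0 → 0 < (⟪h x, x⟫).re) :
    ∃ H : g →L[ℂ] g,
      (∀ x y : g, ⟪H x, y⟫ = ⟪x, H y⟫) ∧
      (∀ x y : g, H (br x y) = br (H x) y + br x (H y)) ∧
      NormedSpace.exp H = h := by
  classical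
  have hT : LinearMap.IsSymmetric (↑h : g →ₗ[ℂ] g) := fun x y => hsa x y
  have hn : Module.finrank ℂ g = Module.finrank ℂ g := rfl
  set b := hT.eigenvectorBasis hn with hb
  set μ := hT.eigenvalues hn with hμdef
  have happ : ∀ i, h (b i) = (μ i : ℂ) • b i := fun i => hT.apply_eigenvectorBasis hn i
  have hone : ∀ i, (⟪b i, b i⟫ : ℂ) = 1 := by
    intro i
    simpa using orthonormal_iff_ite.mp b.orthonormal i i
  have hμpos : ∀ i, 0 < μ i := by
    intro i
    have hne : b i ≠ 0 := b.toBasis.ne_zero i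
    have := hpos (b i) hne
    rw [happ i, inner_smul_left, hone i, mul_one, Complex.conj_ofReal] at this
    simpa using this
  set H : g →L[ℂ] g := ∑ i, (Real.log (μ i) : ℂ) • (innerSL ℂ (b i)).smulRight (b i) with hH
  have Happly : ∀ x : g, H x = ∑ i, (Real.log (μ i) : ℂ) • (⟪b i, x⟫ : ℂ) • b i := by
    intro x
    rw [hH]
    simp [ContinuousLinearMap.sum_apply]
  -- key eigenvector lemma
  have key : ∀ (c : ℝ) (v : g), h v = (c : ℂ) • v → H v = (Real.log c : ℂ) • v := by
    intro c v hv
    have hrep : ∀ i, (⟪b i, v⟫ : ℂ) ≠ 0 → μ i = c := by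
      intro i hi
      have h1 : b.repr (h v) i = μ i * b.repr v i :=
        hT.eigenvectorBasis_apply_self_apply hn v i
      rw [hv, map_smul] at h1
      have h2 : (μ i : ℂ) = (c : ℂ) ∨ b.repr v i = 0 := by simpa using h1.symm
      rw [b.repr_apply_apply] at h2
      rcases h2 with h2 | h2
      · exact_mod_cast h2
      · exact absurd h2 hi
    calc H v = ∑ i, (Real.log (μ i) : ℂ) • (⟪b i, v⟫ : ℂ) • b i := Happly v
      _ = ∑ i, (Real.log c : ℂ) • (⟪b i, v⟫ : ℂ) • b i := by
          refine Finset.sum_congr rfl fun i _ => ?_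
          by_cases hi : (⟪b i, v⟫ : ℂ) = 0
          · simp [hi]
          · rw [hrep i hi]
      _ = (Real.log c : ℂ) • v := by
          rw [← Finset.smul_sum, b.sum_repr' v]
  have hHb : ∀ i, H (b i) = (Real.log (μ i) : ℂ) • b i := fun i => key (μ i) (b i) (happ i)
  -- self-adjointness
  have hHsym : ∀ x y : g, ⟪H x, y⟫ = ⟪x, H y⟫ := by
    intro x y
    rw [Happly x, Happly y, sum_inner, inner_sum]
    refine Finset.sum_congr rfl fun i _ => ?_
    simp only [inner_smul_left, inner_smul_right, Complex.conj_ofReal, ← inner_conj_symm x (b i)]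
    ring
  -- derivation on basis
  have hbasis : ∀ i j, H (br (b i) (b j)) = br (H (b i)) (b j) + br (b i) (H (b j)) := by
    intro i j
    have he : h (br (b i) (b j)) = ((μ i * μ j : ℝ) : ℂ) • br (b i) (b j) := by
      rw [haut, happ i, happ j, LinearMap.map_smul₂, map_smul, smul_smul]
      push_cast
      ring_nf
    have h3 : H (br (b i) (b j)) = (Real.log (μ i * μ j) : ℂ) • br (b i) (b j) := key _ _ he
    rw [h3, hHb i, hHb j, LinearMap.map_smul₂, map_smul,
      Real.log_mul (ne_of_gt (hμpos i)) (ne_of_gt (hμpos j)), Complex.ofReal_add, add_smul]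
  -- derivation in general
  have heq : br.compr₂ (↑H : g →ₗ[ℂ] g) = br.comp (↑H : g →ₗ[ℂ] g) + br.compl₂ (↑H : g →ₗ[ℂ] g) := by
    refine b.toBasis.ext fun i => ?_
    refine b.toBasis.ext fun j => ?_
    simpa [LinearMap.compr₂_apply, LinearMap.compl₂_apply] using hbasis i j
  have hder : ∀ x y : g, H (br x y) = br (H x) y + br x (H y) := by
    intro x y
    have := LinearMap.congr_fun (LinearMap.congr_fun heq x) y
    simpa [LinearMap.compr₂_apply, LinearMap.compl₂_apply] using this
  -- exponential
  have hexp : NormedSpace.exp H = h := by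
    refine ContinuousLinearMap.coe_injective (b.toBasis.ext fun i => ?_)
    simp only [ContinuousLinearMap.coe_coe, OrthonormalBasis.coe_toBasis]
    rw [exp_apply_eigenvector' H _ (b i) (hHb i), happ i, ← Complex.ofReal_exp,
      Real.exp_log (hμpos i)]
  exact ⟨H, hHsym, hder, hexp⟩
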